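/- arXiv:1308.4392 — 7 statements merged into one kernel-verified Lean document; each statement's English description precedes it below -/
import Mathlib

section
/- The polynomial g(x) = 2x^6 - 3a x^5 + 3a x - 2a^2 has strictly positive derivative on the open interval (0,1), i.e., g'(x) = 12x^5 - 15a x^4 + 3a > 0 for all x in (0,1). -/
theorem stmt_0 (a : ℝ) (ha0 : 0 < a) (ha1 : a < 1) :
    ∀ x : ℝ, 0 < x → x < 1 →
      HasDerivAt (fun x : ℝ => 2 * x ^ 6 - 3 * a * x ^ 5 + 3 * a * x - 2 * a ^ 2)
        (12 * x ^ 5 - 15 * a * x ^ 4 + 3 * a) x ∧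
      12 * x ^ 5 - 15 * a * x ^ 4 + 3 * a > 0 := by
  intro x hx0 hx1
  constructor
  · have h : HasDerivAt (fun x : ℝ => 2 * x ^ 6 - 3 * a * x ^ 5 + 3 * a * x - 2 * a ^ 2)
        (2 * (↑6 * x ^ 5) - 3 * a * (↑5 * x ^ 4) + 3 * a * 1) x := by
      exact ((((hasDerivAt_pow 6 x).const_mul 2).sub
        ((hasDerivAt_pow 5 x).const_mul (3 * a))).add
        ((hasDerivAt_id x).const_mul (3 * a))).sub_const _
    convert h using 1
    ring
  · nlinarith [mul_pos ha0 (mul_pos (mul_pos (sub_pos.mpr hx1) (sub_pos.mpr hx1)) (by positivity : (0:ℝ) < 4*x^3+3*x^2+2*x+1)),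
      mul_pos (sub_pos.mpr ha1) (by positivity : (0:ℝ) < 12*x^5)]
end

section
/- The equation 2x^6 - 3a x^5 + 3a x - 2a^2 = 0 has a unique solution x in the open interval (0,1). -/
theorem stmt_2 (a : ℝ) (ha0 : 0 < a) (ha1 : a < 1) :
    ∃! x : ℝ, x ∈ Set.Ioo (0 : ℝ) 1 ∧
      2 * x ^ 6 - 3 * a * x ^ 5 + 3 * a * x - 2 * a ^ 2 = 0 := by
  set f : ℝ → ℝ := fun x => 2 * x ^ 6 - 3 * a * x ^ 5 + 3 * a * x - 2 * a ^ 2 with hf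
  have hd : ∀ x : ℝ, HasDerivAt f (12 * x ^ 5 - 15 * a * x ^ 4 + 3 * a) x := by
    intro x
    have h1 := (hasDerivAt_pow 6 x).const_mul (2 : ℝ)
    have h2 := (hasDerivAt_pow 5 x).const_mul (3 * a)
    have h3 := (hasDerivAt_id x).const_mul (3 * a)
    have h := ((h1.sub h2).add h3).sub_const (2 * a ^ 2)
    refine h.congr_deriv ?_
    norm_num
    ring
  have hcont : ContinuousOn f (Set.Icc 0 1) := by
    apply Continuous.continuousOn
    fun_prop
  have hmono : StrictMonoOn f (Set.Icc 0 1) := by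
    apply strictMonoOn_of_deriv_pos (convex_Icc 0 1) hcont
    intro x hx
    rw [interior_Icc] at hx
    rw [(hd x).deriv]
    nlinarith [mul_pos (pow_pos hx.1 5) (sub_pos.mpr ha1),
      mul_nonneg (mul_nonneg ha0.le (sq_nonneg (x - 1)))
        (by nlinarith [pow_pos hx.1 3, pow_pos hx.1 2, hx.1] : (0:ℝ) ≤ 4 * x ^ 3 + 3 * x ^ 2 + 2 * x + 1)]
  have hf0 : f 0 < 0 := by simp only [hf]; nlinarith
  have hf1 : 0 < f 1 := by simp only [hf]; nlinarith
  have hiv := intermediate_value_Ioo (by norm_num : (0:ℝ) ≤ 1) hcont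
  obtain ⟨x, hx, hfx⟩ := hiv ⟨hf0, hf1⟩
  refine ⟨x, ⟨hx, hfx⟩, ?_⟩
  rintro y ⟨hy, hfy⟩
  exact hmono.injOn (Set.mem_Icc_of_Ioo hy) (Set.mem_Icc_of_Ioo hx) (by rw [hfx]; exact hfy)
end

section
/- If α₀ is the unique root in (0,1) of 2x^6 - 3a x^5 + 3a x - 2a^2 = 0, then α₀ > 2a/3. Consequently c² := (3α₀ - 2a)/(5α₀³) is positive. -/
theorem stmt_3 (a α₀ : ℝ) (ha0 : 0 < a) (ha1 : a < 1)
    (hα0 : 0 < α₀) (hα1 : α₀ < 1)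
    (hroot : 2 * α₀ ^ 6 - 3 * a * α₀ ^ 5 + 3 * a * α₀ - 2 * a ^ 2 = 0) :
    α₀ > 2 * a / 3 ∧ (3 * α₀ - 2 * a) / (5 * α₀ ^ 3) > 0 := by
  have h1 : α₀ > 2 * a / 3 := by
    by_contra h
    push_neg at h
    have hk : 0 < α₀ ^ 5 * (3 * a - 2 * α₀) :=
      mul_pos (pow_pos hα0 5) (by linarith)
    nlinarith [mul_nonneg ha0.le (show 0 ≤ 2 * a - 3 * α₀ by linarith)]
  refine ⟨h1, div_pos (by linarith) (by positivity)⟩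
end

section
/- If α₀ ∈ (0,1) satisfies 2α₀^6 - 3a α₀^5 + 3a α₀ - 2a² = 0 with 0 < a < 1, then c := sqrt((3α₀ - 2a)/(5α₀³)) satisfies c < α₀, i.e., (3α₀ - 2a)/(5α₀³) < α₀². -/
set_option maxHeartbeats 1000000 in
theorem stmt_4 (a α₀ : ℝ) (ha0 : 0 < a) (ha1 : a < 1)
    (hα0 : 0 < α₀) (hα1 : α₀ < 1)
    (hroot : 2 * α₀ ^ 6 - 3 * a * α₀ ^ 5 + 3 * a * α₀ - 2 * a ^ 2 = 0) :
    (3 * α₀ - 2 * a) / (5 * α₀ ^ 3) < α₀ ^ 2 := by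
  rw [div_lt_iff₀ (by positivity)]
  nlinarith [sq_nonneg (α₀ - a), sq_nonneg (α₀ ^ 3 - a), sq_nonneg (α₀ ^ 2 - a),
    mul_pos ha0 hα0, sq_nonneg (α₀ ^ 3 - α₀), mul_pos hα0 hα0,
    mul_pos (mul_pos hα0 hα0) hα0, sq_nonneg (α₀ ^ 2 - α₀ * a),
    mul_pos ha0 (mul_pos hα0 hα0)]
end

section
/- For 0 < λ < 1, the equation x^6 - 3λx^4 + 3λx^2 - λ² = 0 has a unique solution x in the open interval (0,1). -/
theorem stmt_11 (lam : ℝ) (hl0 : 0 < lam) (hl1 : lam < 1) :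
    ∃! x : ℝ, x ∈ Set.Ioo (0 : ℝ) 1 ∧
      x ^ 6 - 3 * lam * x ^ 4 + 3 * lam * x ^ 2 - lam ^ 2 = 0 := by
  set f : ℝ → ℝ := fun x => x ^ 6 - 3 * lam * x ^ 4 + 3 * lam * x ^ 2 - lam ^ 2 with hf
  have hcont : Continuous f := by fun_prop
  have hderiv : ∀ x : ℝ, HasDerivAt f (6 * x ^ 5 - 12 * lam * x ^ 3 + 6 * lam * x) x := by
    intro x
    have h : HasDerivAt f
        (6 * x ^ 5 - 3 * lam * (4 * x ^ 3) + 3 * lam * (2 * x) - 0) x := by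
      simpa [hf, Pi.sub_def, Pi.add_def] using
        ((((hasDerivAt_pow 6 x).sub
          (((hasDerivAt_pow 4 x).const_mul (3 * lam)))).add
          (((hasDerivAt_pow 2 x).const_mul (3 * lam)))).sub (hasDerivAt_const x (lam ^ 2)))
    convert h using 1; ring
  have hmono : StrictMonoOn f (Set.Icc (0 : ℝ) 1) := by
    apply strictMonoOn_of_deriv_pos (convex_Icc 0 1) hcont.continuousOn
    intro x hx
    rw [interior_Icc] at hx
    rw [(hderiv x).deriv]
    have h1 : 0 < x ^ 4 - 2 * lam * x ^ 2 + lam := by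
      have : x ^ 4 - 2 * lam * x ^ 2 + lam = (x ^ 2 - lam) ^ 2 + lam * (1 - lam) := by ring
      rw [this]
      have := mul_pos hl0 (by linarith : (0:ℝ) < 1 - lam)
      positivity
    have h2 : 0 < 6 * x * (x ^ 4 - 2 * lam * x ^ 2 + lam) := by
      apply mul_pos (by linarith [hx.1]) h1
    nlinarith
  have hf0 : f 0 = -lam ^ 2 := by simp [hf]
  have hf1 : f 1 = 1 - lam ^ 2 := by simp only [hf]; norm_num
  have hsub : Set.Ioo (f 0) (f 1) ⊆ f '' Set.Ioo 0 1 :=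
    intermediate_value_Ioo (by norm_num) hcont.continuousOn
  have h0mem : (0 : ℝ) ∈ Set.Ioo (f 0) (f 1) := by
    rw [hf0, hf1]
    constructor <;> nlinarith
  obtain ⟨x, hx, hfx⟩ := hsub h0mem
  refine ⟨x, ⟨hx, hfx⟩, ?_⟩
  rintro y ⟨hy, hfy⟩
  exact hmono.injOn (Set.mem_Icc_of_Ioo hy) (Set.mem_Icc_of_Ioo hx) (hfy.trans hfx.symm)
end

section
/- Let 0 < λ < 1 and let α₀ ∈ (0,1) satisfy α₀^6 - 3λα₀^4 + 3λα₀^2 - λ² = 0. Then α₀ > sqrt(λ/3); equivalently α₀² > λ/3, and hence c := (3α₀² - λ)/(4α₀³) is positive. -/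
theorem stmt_12 (lam α₀ : ℝ) (hl0 : 0 < lam) (hl1 : lam < 1)
    (hα0 : 0 < α₀) (hα1 : α₀ < 1)
    (hroot : α₀ ^ 6 - 3 * lam * α₀ ^ 4 + 3 * lam * α₀ ^ 2 - lam ^ 2 = 0) :
    α₀ > Real.sqrt (lam / 3) ∧ α₀ ^ 2 > lam / 3 ∧
      (3 * α₀ ^ 2 - lam) / (4 * α₀ ^ 3) > 0 := by
  have h2 : α₀ ^ 2 > lam / 3 := by
    by_contra h
    push_neg at h
    have ht : α₀ ^ 2 ≤ lam / 3 := h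
    have hfac : (0:ℝ) ≤ α₀^4 + α₀^2 * (lam/3) + (lam/3)^2 - 3*lam*(α₀^2 + lam/3) + 3*lam := by
      nlinarith [sq_nonneg α₀, sq_nonneg (α₀^2)]
    nlinarith [mul_nonneg (by linarith : (0:ℝ) ≤ lam/3 - α₀^2) hfac,
      mul_pos (mul_pos hl0 hl0) hl0]
  refine ⟨?_, h2, ?_⟩
  · rw [show (α₀ > Real.sqrt (lam/3)) ↔ Real.sqrt (lam/3) < α₀ from Iff.rfl,
      Real.sqrt_lt' hα0]
    nlinarith
  · apply div_pos (by linarith) (by positivity)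
end

section
/- Let 0 < λ < 1 and α₀ ∈ (0,1) satisfy α₀^6 - 3λα₀^4 + 3λα₀² - λ² = 0. Then c := (3α₀² - λ)/(4α₀³) satisfies c < α₀. -/
theorem stmt_13 (lam α₀ : ℝ) (hl0 : 0 < lam) (hl1 : lam < 1)
    (hα0 : 0 < α₀) (hα1 : α₀ < 1)
    (hroot : α₀ ^ 6 - 3 * lam * α₀ ^ 4 + 3 * lam * α₀ ^ 2 - lam ^ 2 = 0) :
    (3 * α₀ ^ 2 - lam) / (4 * α₀ ^ 3) < α₀ := by
  rw [div_lt_iff₀ (by positivity)]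
  by_contra h
  push_neg at h
  rcases le_or_gt (α₀ ^ 4) lam with hc | hc
  · nlinarith [mul_nonneg (sub_nonneg.2 hc) (by nlinarith : (0:ℝ) ≤ 3 * α₀ ^ 2 - 4 * α₀ ^ 4 - lam),
      pow_pos hα0 6, pow_pos hα0 4, mul_pos (pow_pos hα0 6) (sub_pos.2 hα1),
      mul_pos (mul_pos (pow_pos hα0 6) hα0) (sub_pos.2 hα1)]
  · nlinarith [pow_lt_pow_left₀ hα1 (le_of_lt hα0) two_ne_zero, mul_pos hl0 hl0,
      mul_lt_mul_of_pos_left hc hl0, pow_pos hα0 6, pow_pos hα0 8,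
      mul_pos hl0 (pow_pos hα0 2), mul_pos hl0 (pow_pos hα0 4)]
end
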